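/- Let 0 < δ₀ < 2/3 and c₀ = (1/(2√2))·(√((4-δ₀)/5) - √δ₀) > 0. For every n and every unit vector a in ℝⁿ with a₁ ≥ ... ≥ a_n ≥ 0 and δ(a) = 2 - √2(a₁+a₂) ≤ δ₀, and i.i.d. Rademacher signs ε₁,...,ε_n, we have E|∑_{j=1}^n aⱼεⱼ| ≥ 1/√2 + c₀·√(δ(a)). -/

import Mathlib

open Real MeasureTheory ProbabilityTheory

namespace SzarekCube

noncomputable def sg (b : Bool) : ℝ := if b then 1 else -1

lemma sg_not (b : Bool) : sg (!b) = - sg b := by cases b <;> simp [sg]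

lemma abs_sg (b : Bool) : |sg b| = 1 := by cases b <;> simp [sg]

lemma sg_sq (b : Bool) : sg b ^ 2 = 1 := by cases b <;> norm_num [sg]

noncomputable def flip {m : ℕ} (i : Fin m) (s : Fin m → Bool) : Fin m → Bool :=
  Function.update s i (!(s i))

noncomputable def dd {m : ℕ} (i : Fin m) (F : (Fin m → Bool) → ℝ) (s : Fin m → Bool) : ℝ :=
  F s - F (flip i s)

lemma sum_cons {M : Type*} [AddCommMonoid M] {m : ℕ} (F : (Fin (m + 1) → Bool) → M) :
    ∑ s : Fin (m + 1) → Bool, F s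
      = ∑ s : Fin m → Bool, (F (Fin.cons false s) + F (Fin.cons true s)) := by
  have h1 : ∑ s : Fin (m + 1) → Bool, F s
      = ∑ p : Bool × (Fin m → Bool), F (Fin.cons p.1 p.2) :=
    (Fintype.sum_equiv (Fin.consEquiv (fun _ => Bool))
      (fun p => F (Fin.cons p.1 p.2)) F (fun p => rfl)).symm
  rw [h1, Fintype.sum_prod_type, Fintype.sum_bool]
  rw [← Finset.sum_add_distrib]
  exact Finset.sum_congr rfl (fun s _ => add_comm _ _)

lemma not_cons {m : ℕ} (t : Bool) (s : Fin m → Bool) :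
    (fun j => !((Fin.cons t s : Fin (m+1) → Bool) j))
      = Fin.cons (α := fun _ => Bool) (!t) (fun j => !(s j)) := by
  funext j
  refine Fin.cases ?_ ?_ j <;> simp

lemma flip_cons_zero {m : ℕ} (t : Bool) (s : Fin m → Bool) :
    flip 0 (Fin.cons t s) = Fin.cons (α := fun _ => Bool) (!t) s := by
  simp [flip, Fin.update_cons_zero]

lemma flip_cons_succ {m : ℕ} (i : Fin m) (t : Bool) (s : Fin m → Bool) :
    flip i.succ (Fin.cons t s) = Fin.cons t (flip i s) := by
  simp [flip, ← Fin.cons_update]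

lemma sum_dd_succ {m : ℕ} (F : (Fin (m + 1) → Bool) → ℝ) :
    ∑ i : Fin (m + 1), ∑ s : Fin (m + 1) → Bool, dd i F s ^ 2
      = (∑ s' : Fin m → Bool, 2 * (F (Fin.cons true s') - F (Fin.cons false s')) ^ 2)
        + ∑ i : Fin m, ∑ s' : Fin m → Bool,
            ((dd i (fun s => F (Fin.cons false s)) s') ^ 2
              + (dd i (fun s => F (Fin.cons true s)) s') ^ 2) := by
  rw [Fin.sum_univ_succ]
  congr 1
  · rw [sum_cons (fun s => dd 0 F s ^ 2)]
    refine Finset.sum_congr rfl (fun s' _ => ?_)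
    simp only [dd, flip_cons_zero]
    norm_num
    ring
  · refine Finset.sum_congr rfl (fun i _ => ?_)
    rw [sum_cons (fun s => dd i.succ F s ^ 2)]
    refine Finset.sum_congr rfl (fun s' _ => ?_)
    simp only [dd, flip_cons_succ]

lemma oddP : ∀ (m : ℕ) (F : (Fin m → Bool) → ℝ), (∀ s, F (fun j => !(s j)) = - F s) →
    4 * ∑ s, F s ^ 2 ≤ ∑ i, ∑ s, dd i F s ^ 2 := by
  intro m
  induction m with
  | zero =>
    intro F hF
    have hz : ∀ s : Fin 0 → Bool, F s = 0 := by
      intro s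
      have h := hF s
      have e : (fun j => !(s j)) = s := funext (fun j => j.elim0)
      rw [e] at h; linarith
    have h1 : ∑ s : Fin 0 → Bool, F s ^ 2 = 0 :=
      Finset.sum_eq_zero (fun s _ => by rw [hz s]; ring)
    rw [h1]
    simp
  | succ m ih =>
    intro F hF
    set Ff : (Fin m → Bool) → ℝ := fun s => F (Fin.cons false s) with hFf
    set Ft : (Fin m → Bool) → ℝ := fun s => F (Fin.cons true s) with hFt
    have hodd : ∀ s : Fin m → Bool, Ff (fun j => !(s j)) = - Ft s := by
      intro s
      have h := hF (Fin.cons true s)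
      rw [not_cons] at h
      simpa [hFf, hFt] using h
    have hodd' : ∀ s : Fin m → Bool, Ft (fun j => !(s j)) = - Ff s := by
      intro s
      have h := hF (Fin.cons false s)
      rw [not_cons] at h
      simpa [hFf, hFt] using h
    set G : (Fin m → Bool) → ℝ := fun s => Ff s + Ft s with hG
    have hGodd : ∀ s, G (fun j => !(s j)) = - G s := by
      intro s; simp only [hG]
      rw [hodd s, hodd' s]; ring
    have ihG := ih G hGodd
    rw [sum_dd_succ F, sum_cons (fun s => F s ^ 2)]
    have hddG : ∀ (i : Fin m) (s' : Fin m → Bool),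
        dd i G s' = dd i Ff s' + dd i Ft s' := by
      intro i s'; simp only [dd, hG]; ring
    have hsum : ∑ i : Fin m, ∑ s', (dd i G s') ^ 2
        ≤ 2 * ∑ i : Fin m, ∑ s', ((dd i Ff s') ^ 2 + (dd i Ft s') ^ 2) := by
      rw [Finset.mul_sum]
      refine Finset.sum_le_sum (fun i _ => ?_)
      rw [Finset.mul_sum]
      refine Finset.sum_le_sum (fun s' _ => ?_)
      rw [hddG i s']
      nlinarith [sq_nonneg (dd i Ff s' - dd i Ft s')]
    have E1 : 4 * ∑ s', (Ff s' ^ 2 + Ft s' ^ 2)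
        = (∑ s', 2 * (Ft s' - Ff s') ^ 2) + 2 * ∑ s', G s' ^ 2 := by
      rw [Finset.mul_sum, Finset.mul_sum, ← Finset.sum_add_distrib]
      refine Finset.sum_congr rfl (fun s' _ => ?_)
      simp only [hG]; ring
    -- goal : 4 * ∑ s', (Ff s' ^2 + Ft s' ^2) ≤ ∑ s', 2*(Ft s' - Ff s')^2 + ∑ i, ∑ s', (...)
    rw [E1]
    linarith [ihG, hsum]

lemma evenP : ∀ (m : ℕ) (F : (Fin m → Bool) → ℝ), (∀ s, F (fun j => !(s j)) = F s) →
    8 * ((2 ^ m : ℝ) * (∑ s, F s ^ 2) - (∑ s, F s) ^ 2)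
      ≤ (2 ^ m : ℝ) * ∑ i, ∑ s, dd i F s ^ 2 := by
  intro m
  induction m with
  | zero =>
    intro F hF
    have huniv : (Finset.univ : Finset (Fin 0 → Bool)) = {fun j => j.elim0} := by
      apply Finset.eq_of_subset_of_card_le
      · intro x _
        simp only [Finset.mem_singleton]
        funext j; exact j.elim0
      · simp
    rw [huniv]
    simp
  | succ m ih =>
    intro F hF
    set Ff : (Fin m → Bool) → ℝ := fun s => F (Fin.cons false s) with hFf
    set Ft : (Fin m → Bool) → ℝ := fun s => F (Fin.cons true s) with hFt
    have hev : ∀ s : Fin m → Bool, Ff (fun j => !(s j)) = Ft s := by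
      intro s
      have h := hF (Fin.cons true s)
      rw [not_cons] at h
      simpa [hFf, hFt] using h
    have hev' : ∀ s : Fin m → Bool, Ft (fun j => !(s j)) = Ff s := by
      intro s
      have h := hF (Fin.cons false s)
      rw [not_cons] at h
      simpa [hFf, hFt] using h
    set G : (Fin m → Bool) → ℝ := fun s => Ff s + Ft s with hG
    set H : (Fin m → Bool) → ℝ := fun s => Ft s - Ff s with hH
    have hGeven : ∀ s, G (fun j => !(s j)) = G s := by
      intro s; simp only [hG]; rw [hev s, hev' s]; ring
    have hHodd : ∀ s, H (fun j => !(s j)) = - H s := by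
      intro s; simp only [hH]; rw [hev s, hev' s]; ring
    have ihG := ih G hGeven
    have ihH := oddP m H hHodd
    rw [sum_dd_succ F, sum_cons (fun s => F s ^ 2), sum_cons F]
    have hddGH : ∀ (i : Fin m) (s' : Fin m → Bool),
        (dd i Ff s') ^ 2 + (dd i Ft s') ^ 2
          = ((dd i G s') ^ 2 + (dd i H s') ^ 2) / 2 := by
      intro i s'; simp only [dd, hG, hH]; ring
    have E0 : ∑ s' : Fin m → Bool, (F (Fin.cons false s') + F (Fin.cons true s')) = ∑ s', G s' :=
      Finset.sum_congr rfl (fun s' _ => by simp only [hG, hFf, hFt])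
    have E1 : ∑ s' : Fin m → Bool, (F (Fin.cons false s') ^ 2 + F (Fin.cons true s') ^ 2)
        = ((∑ s', G s' ^ 2) + ∑ s', H s' ^ 2) / 2 := by
      rw [← Finset.sum_add_distrib, Finset.sum_div]
      refine Finset.sum_congr rfl (fun s' _ => ?_)
      simp only [hG, hH, hFf, hFt]; ring
    have E2 : ∑ i : Fin m, ∑ s' : Fin m → Bool, ((dd i Ff s') ^ 2 + (dd i Ft s') ^ 2)
        = ((∑ i : Fin m, ∑ s', (dd i G s') ^ 2) + ∑ i : Fin m, ∑ s', (dd i H s') ^ 2) / 2 := by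
      rw [← Finset.sum_add_distrib, Finset.sum_div]
      refine Finset.sum_congr rfl (fun i _ => ?_)
      rw [← Finset.sum_add_distrib, Finset.sum_div]
      exact Finset.sum_congr rfl (fun s' _ => hddGH i s')
    have E3 : ∑ s' : Fin m → Bool, 2 * (F (Fin.cons true s') - F (Fin.cons false s')) ^ 2
        = 2 * ∑ s', H s' ^ 2 := by
      rw [Finset.mul_sum]
    rw [E0, E1, E2, E3]
    have hp : (2:ℝ) ^ (m + 1) = 2 * 2 ^ m := by ring
    rw [hp]
    nlinarith [ihG, ihH, sq_nonneg (∑ s', G s'), pow_pos (by norm_num : (0:ℝ) < 2) m]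


lemma inner_cons {m : ℕ} (a : Fin (m + 1) → ℝ) (t : Bool) (s : Fin m → Bool) :
    ∑ j : Fin (m + 1), a j * sg ((Fin.cons t s : Fin (m + 1) → Bool) j)
      = a 0 * sg t + ∑ j : Fin m, a j.succ * sg (s j) := by
  rw [Fin.sum_univ_succ]
  simp

lemma sum_sq_signs : ∀ (m : ℕ) (a : Fin m → ℝ),
    ∑ s : Fin m → Bool, (∑ j, a j * sg (s j)) ^ 2 = 2 ^ m * ∑ j, a j ^ 2 := by
  intro m
  induction m with
  | zero => intro a; simp
  | succ m ih =>
    intro a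
    rw [sum_cons (fun s => (∑ j, a j * sg (s j)) ^ 2)]
    have e1 : ∀ s : Fin m → Bool,
        (∑ j, a j * sg ((Fin.cons false s : Fin (m+1) → Bool) j)) ^ 2
          + (∑ j, a j * sg ((Fin.cons true s : Fin (m+1) → Bool) j)) ^ 2
        = 2 * (∑ j : Fin m, a j.succ * sg (s j)) ^ 2 + 2 * a 0 ^ 2 := by
      intro s
      rw [inner_cons, inner_cons]
      have hf : sg false = -1 := by simp [sg]
      have ht : sg true = 1 := by simp [sg]
      rw [hf, ht]; ring
    rw [Finset.sum_congr rfl (fun s _ => e1 s), Finset.sum_add_distrib]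
    rw [← Finset.mul_sum, ih (fun j => a j.succ), Finset.sum_const]
    have hcard : (Finset.univ : Finset (Fin m → Bool)).card = 2 ^ m := by
      simp
    rw [hcard, Fin.sum_univ_succ (fun j => a j ^ 2)]
    push_cast
    ring

lemma sum_sg_flip {m : ℕ} (a : Fin m → ℝ) (i : Fin m) (s : Fin m → Bool) :
    ∑ j, a j * sg (flip i s j) = (∑ j, a j * sg (s j)) - 2 * a i * sg (s i) := by
  have key : ∑ j, (a j * sg (flip i s j) - a j * sg (s j)) = - (2 * a i * sg (s i)) := by
    rw [Finset.sum_eq_single i]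
    · have : flip i s i = !(s i) := by simp [flip]
      rw [this, sg_not]; ring
    · intro j _ hj
      have : flip i s j = s j := by simp [flip, Function.update_of_ne hj]
      rw [this]; ring
    · intro h; exact absurd (Finset.mem_univ i) h
  have := Finset.sum_sub_distrib (f := fun j => a j * sg (flip i s j))
    (g := fun j => a j * sg (s j)) (s := Finset.univ)
  rw [this] at key
  linarith

lemma szarek (m : ℕ) (a : Fin m → ℝ) :
    (2 ^ m : ℝ) * Real.sqrt (∑ j, a j ^ 2) ≤
      Real.sqrt 2 * ∑ s : Fin m → Bool, |∑ j, a j * sg (s j)| := by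
  set f : (Fin m → Bool) → ℝ := fun s => |∑ j, a j * sg (s j)| with hf
  have hfeven : ∀ s, f (fun j => !(s j)) = f s := by
    intro s
    simp only [hf]
    have : ∑ j, a j * sg (!(s j)) = - ∑ j, a j * sg (s j) := by
      rw [← Finset.sum_neg_distrib]
      exact Finset.sum_congr rfl (fun j _ => by rw [sg_not]; ring)
    rw [this, abs_neg]
  have hP := evenP m f hfeven
  have hsq : ∑ s, f s ^ 2 = 2 ^ m * ∑ j, a j ^ 2 := by
    rw [← sum_sq_signs m a]
    exact Finset.sum_congr rfl (fun s _ => sq_abs _)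
  have hdd : ∑ i, ∑ s, dd i f s ^ 2 ≤ (2 ^ m : ℝ) * (4 * ∑ j, a j ^ 2) := by
    have h1 : ∀ i : Fin m, ∑ s, dd i f s ^ 2 ≤ (2 ^ m : ℝ) * (4 * a i ^ 2) := by
      intro i
      have h2 : ∀ s : Fin m → Bool, dd i f s ^ 2 ≤ 4 * a i ^ 2 := by
        intro s
        have hb : |(∑ j, a j * sg (s j)) - ∑ j, a j * sg (flip i s j)|
            = |2 * a i * sg (s i)| := by
          rw [sum_sg_flip]; congr 1; ring
        have h3 : |2 * a i * sg (s i)| = 2 * |a i| := by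
          rw [abs_mul, abs_sg, mul_one, abs_mul, abs_two]
        have habs : |f s - f (flip i s)| ≤ 2 * |a i| := by
          simp only [hf]
          rw [← h3, ← hb]
          exact abs_abs_sub_abs_le_abs_sub _ _
        have h5 := pow_le_pow_left₀ (abs_nonneg (f s - f (flip i s))) habs 2
        rw [sq_abs] at h5
        have h6 : (2 * |a i|) ^ 2 = 4 * a i ^ 2 := by
          rw [mul_pow, sq_abs]; norm_num
        have h7 : dd i f s = f s - f (flip i s) := rfl
        rw [h7, ← h6]; exact h5
      calc ∑ s, dd i f s ^ 2 ≤ ∑ _s : Fin m → Bool, 4 * a i ^ 2 :=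
            Finset.sum_le_sum (fun s _ => h2 s)
        _ = (2 ^ m : ℝ) * (4 * a i ^ 2) := by
            rw [Finset.sum_const, Finset.card_univ]
            have hcard : Fintype.card (Fin m → Bool) = 2 ^ m := by simp
            rw [hcard, nsmul_eq_mul]
            push_cast
            ring
    calc ∑ i, ∑ s, dd i f s ^ 2 ≤ ∑ i : Fin m, (2 ^ m : ℝ) * (4 * a i ^ 2) :=
          Finset.sum_le_sum (fun i _ => h1 i)
      _ = (2 ^ m : ℝ) * (4 * ∑ j, a j ^ 2) := by
          rw [← Finset.mul_sum]
          congr 1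
          rw [← Finset.mul_sum]
  -- combine: 8*(2^m * (2^m σ²) - A²) ≤ 2^m * (2^m * 4σ²)  →  A² ≥ 2^{2m} σ² / 2
  set A := ∑ s, f s with hA
  have hApos : 0 ≤ A := Finset.sum_nonneg (fun s _ => abs_nonneg _)
  have hσ : 0 ≤ ∑ j, a j ^ 2 := Finset.sum_nonneg (fun j _ => sq_nonneg _)
  have hAsq : 2 * A ^ 2 ≥ ((2:ℝ) ^ m) ^ 2 * ∑ j, a j ^ 2 := by
    rw [hsq] at hP
    have h2m : (0:ℝ) < 2 ^ m := by positivity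
    nlinarith [mul_le_mul_of_nonneg_left hdd (le_of_lt h2m)]
  -- conclude
  have lhs_nonneg : 0 ≤ (2 ^ m : ℝ) * Real.sqrt (∑ j, a j ^ 2) := by positivity
  have rhs_nonneg : 0 ≤ Real.sqrt 2 * A := by positivity
  have hsq2 : ((2 ^ m : ℝ) * Real.sqrt (∑ j, a j ^ 2)) ^ 2 ≤ (Real.sqrt 2 * A) ^ 2 := by
    rw [mul_pow, mul_pow, Real.sq_sqrt hσ, Real.sq_sqrt (by norm_num : (0:ℝ) ≤ 2)]
    nlinarith [hAsq]
  have key : (2 ^ m : ℝ) * Real.sqrt (∑ j, a j ^ 2) ≤ Real.sqrt 2 * A := by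
    calc (2 ^ m : ℝ) * Real.sqrt (∑ j, a j ^ 2)
        = Real.sqrt (((2 ^ m : ℝ) * Real.sqrt (∑ j, a j ^ 2)) ^ 2) :=
          (Real.sqrt_sq lhs_nonneg).symm
      _ ≤ Real.sqrt ((Real.sqrt 2 * A) ^ 2) := Real.sqrt_le_sqrt hsq2
      _ = Real.sqrt 2 * A := Real.sqrt_sq rhs_nonneg
  exact key


lemma scalarA (r2 u v w b1 b2 c0 : ℝ)
    (hr2 : r2 ^ 2 = 2) (hr2pos : 0 < r2)
    (hu : 0 ≤ u) (huv : u ≤ v) (hvw : v ≤ w)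
    (hb1 : r2 * b1 = 2 - u ^ 2)
    (hc0 : c0 = 1 / (2 * r2) * (w - v))
    (hb2 : b2 ≥ u * w / r2) :
    b1 / 2 + b2 / 2 ≥ 1 / r2 + c0 * u := by
  have hdiv : ∀ x : ℝ, x / (2 * r2) = x * r2 / 4 := by
    intro x
    rw [div_eq_div_iff (by positivity : (0:ℝ) < 2 * r2).ne' (by norm_num : (4:ℝ) ≠ 0)]
    linear_combination (-2 * x) * hr2
  have h1r2 : 1 / r2 = r2 / 2 := by
    rw [div_eq_div_iff (ne_of_gt hr2pos) (by norm_num : (2:ℝ) ≠ 0)]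
    linear_combination (-1 : ℝ) * hr2
  have hc0' : c0 = (w - v) * r2 / 4 := by
    rw [hc0, div_mul_eq_mul_div, one_mul, hdiv]
  have hrb2 : r2 * b2 ≥ u * w := by
    have h1 := mul_le_mul_of_nonneg_left hb2 (le_of_lt hr2pos)
    have h2 : r2 * (u * w / r2) = u * w := by field_simp
    linarith [h1, h2.le, h2.ge]
  have e2 : 2 * b1 = (2 - u ^ 2) * r2 := by
    have h3 : r2 * (r2 * b1) = r2 * (2 - u ^ 2) := by rw [hb1]
    linear_combination h3 - b1 * hr2
  have e3 : 2 * b2 ≥ (u * w) * r2 := by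
    have er : r2 * (r2 * b2) = 2 * b2 := by rw [← mul_assoc, ← sq, hr2]
    have h4 := mul_le_mul_of_nonneg_left hrb2 (le_of_lt hr2pos)
    linarith [h4, er.le, er.ge]
  rw [h1r2, hc0', ge_iff_le]
  have hfin := mul_nonneg (mul_nonneg hu (sub_nonneg.mpr huv)) (le_of_lt hr2pos)
  nlinarith [e2, e3, hfin]

lemma scalarB (r2 u v w b1 b2 c0 σ : ℝ)
    (hr2 : r2 ^ 2 = 2) (hr2pos : 0 < r2)
    (hu : 0 ≤ u) (huv : u ≤ v) (hvw : v ≤ w) (hw : 0 ≤ w)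
    (hw2 : w ^ 2 = (4 - v ^ 2) / 5)
    (hb1 : r2 * b1 = 2 - u ^ 2)
    (hc0 : c0 = 1 / (2 * r2) * (w - v))
    (hb2l : 0 ≤ b2) (hb2 : b2 ≤ u * w / r2)
    (hσ : 0 ≤ σ) (hσ2 : σ ^ 2 = 1 - (b1 ^ 2 + b2 ^ 2) / 2) :
    b1 / 2 + σ / (2 * r2) ≥ 1 / r2 + c0 * u := by
  have hdiv : ∀ x : ℝ, x / (2 * r2) = x * r2 / 4 := by
    intro x
    rw [div_eq_div_iff (by positivity : (0:ℝ) < 2 * r2).ne' (by norm_num : (4:ℝ) ≠ 0)]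
    linear_combination (-2 * x) * hr2
  have h1r2 : 1 / r2 = r2 / 2 := by
    rw [div_eq_div_iff (ne_of_gt hr2pos) (by norm_num : (2:ℝ) ≠ 0)]
    linear_combination (-1 : ℝ) * hr2
  have hc0' : c0 = (w - v) * r2 / 4 := by
    rw [hc0, div_mul_eq_mul_div, one_mul, hdiv]
  have huw : σ ≥ u * w := by
    have hb2sq : b2 ^ 2 ≤ u ^ 2 * w ^ 2 / 2 := by
      have h1 : b2 ^ 2 ≤ (u * w / r2) ^ 2 := pow_le_pow_left₀ hb2l hb2 2
      have h2 : (u * w / r2) ^ 2 = u ^ 2 * w ^ 2 / 2 := by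
        rw [div_pow, hr2]; ring
      linarith [h1, h2.le, h2.ge]
    have hu2 : u ^ 2 ≤ v ^ 2 := by nlinarith
    have hb1sq : 2 * b1 ^ 2 = (2 - u ^ 2) ^ 2 := by
      have h3 : (r2 * b1) ^ 2 = (2 - u ^ 2) ^ 2 := by rw [hb1]
      linear_combination h3 + (- b1 ^ 2) * hr2
    have hu4 : u ^ 2 * u ^ 2 ≤ u ^ 2 * v ^ 2 :=
      mul_le_mul_of_nonneg_left hu2 (sq_nonneg u)
    have hw2u : u ^ 2 * w ^ 2 = u ^ 2 * ((4 - v ^ 2) / 5) := by rw [hw2]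
    have key : σ ^ 2 ≥ (u * w) ^ 2 := by nlinarith [hb1sq, hb2sq, hu4, hw2u.le, hw2u.ge]
    nlinarith [mul_nonneg hu hw, key]
  have e2 : 2 * b1 = (2 - u ^ 2) * r2 := by
    have h3 : r2 * (r2 * b1) = r2 * (2 - u ^ 2) := by rw [hb1]
    linear_combination h3 - b1 * hr2
  rw [h1r2, hc0', hdiv, ge_iff_le]
  have hfin := mul_nonneg (mul_nonneg hu (sub_nonneg.mpr huv)) (le_of_lt hr2pos)
  nlinarith [e2, mul_le_mul_of_nonneg_right huw (le_of_lt hr2pos), hfin]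

lemma sum_prod_bool : ∀ (m : ℕ) (g : Fin m → Bool → ENNReal),
    ∑ s : Fin m → Bool, ∏ j, g j (s j) = ∏ j, (g j false + g j true) := by
  intro m
  induction m with
  | zero => intro g; simp
  | succ k ih =>
    intro g
    rw [sum_cons (fun s => ∏ j, g j (s j))]
    have e1 : ∀ (t : Bool) (s : Fin k → Bool),
        ∏ j : Fin (k+1), g j ((Fin.cons t s : Fin (k+1) → Bool) j)
          = g 0 t * ∏ j : Fin k, g j.succ (s j) := by
      intro t s
      rw [Fin.prod_univ_succ]
      simp
    have e2 : ∀ s : Fin k → Bool,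
        (∏ j : Fin (k+1), g j ((Fin.cons false s : Fin (k+1) → Bool) j))
          + ∏ j : Fin (k+1), g j ((Fin.cons true s : Fin (k+1) → Bool) j)
        = (g 0 false + g 0 true) * ∏ j : Fin k, g j.succ (s j) := by
      intro s
      rw [e1, e1, add_mul]
    rw [Finset.sum_congr rfl (fun s _ => e2 s), ← Finset.mul_sum,
      ih (fun j b => g j.succ b), Fin.prod_univ_succ (fun j => g j false + g j true)]

lemma measure_reduction {Ω : Type*} [MeasurableSpace Ω] (μ : Measure Ω)
    [IsProbabilityMeasure μ] (m : ℕ) (a : Fin m → ℝ) (ε : Fin m → Ω → ℝ)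
    (hεindep : iIndepFun ε μ)
    (hεdist : ∀ j, Measure.map (ε j) μ =
      (2⁻¹ : ENNReal) • (Measure.dirac (1 : ℝ) + Measure.dirac (-1 : ℝ))) :
    ∫ ω, |∑ j, a j * ε j ω| ∂μ
      = (∑ s : Fin m → Bool, |∑ j, a j * sg (s j)|) / 2 ^ m := by
  classical
  set ν : Fin m → Measure ℝ :=
    fun _ => (2⁻¹ : ENNReal) • (Measure.dirac (1 : ℝ) + Measure.dirac (-1 : ℝ)) with hν
  have hνuniv : ((2⁻¹ : ENNReal) • (Measure.dirac (1 : ℝ) + Measure.dirac (-1 : ℝ)))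
      Set.univ = 1 := by
    simp [Measure.smul_apply, Measure.add_apply]
    rw [← two_mul]
    exact ENNReal.mul_inv_cancel (by norm_num) (by norm_num)
  haveI : IsProbabilityMeasure
      ((2⁻¹ : ENNReal) • (Measure.dirac (1 : ℝ) + Measure.dirac (-1 : ℝ))) := ⟨hνuniv⟩
  -- each ε j is AEMeasurable
  have hεae : ∀ j, AEMeasurable (ε j) μ := by
    intro j
    by_contra h
    have h0 := Measure.map_of_not_aemeasurable h (μ := μ) (f := ε j)
    rw [hεdist j] at h0
    have h1 := hνuniv
    rw [h0] at h1
    simp at h1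
  -- tuple is AEMeasurable
  have htuple : AEMeasurable (fun ω j => ε j ω) μ := by
    refine ⟨fun ω j => (hεae j).mk _ ω,
      measurable_pi_lambda _ (fun j => (hεae j).measurable_mk), ?_⟩
    filter_upwards [ae_all_iff.2 (fun j => (hεae j).ae_eq_mk)] with ω hω
    funext j
    exact hω j
  -- joint law is the product measure
  have hmap : Measure.map (fun ω j => ε j ω) μ = Measure.pi ν := by
    symm
    refine Measure.pi_eq (μ := ν) (fun B hB => ?_)
    rw [Measure.map_apply_of_aemeasurable htuple (MeasurableSet.univ_pi hB)]
    have hpre : (fun ω j => ε j ω) ⁻¹' Set.pi Set.univ B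
        = ⋂ j ∈ (Finset.univ : Finset (Fin m)), ε j ⁻¹' B j := by
      ext ω
      simp [Set.mem_pi]
    rw [hpre, hεindep.measure_inter_preimage_eq_mul Finset.univ (fun j _ => hB j)]
    refine Finset.prod_congr rfl (fun j _ => ?_)
    rw [← Measure.map_apply_of_aemeasurable (hεae j) (hB j), hεdist j]
  -- the product measure is the uniform discrete measure
  have hdisc : Measure.pi ν
      = (2 ^ m : ENNReal)⁻¹ • ∑ s : Fin m → Bool, Measure.dirac (fun j => sg (s j)) := by
    refine Measure.pi_eq (μ := ν) (fun B hB => ?_)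
    have hBpi : MeasurableSet (Set.pi Set.univ B) := MeasurableSet.univ_pi hB
    rw [Measure.smul_apply, Measure.finset_sum_apply]
    have hdir : ∀ s : Fin m → Bool,
        Measure.dirac (fun j => sg (s j)) (Set.pi Set.univ B)
          = ∏ j, (if sg (s j) ∈ B j then (1:ENNReal) else 0) := by
      intro s
      rw [Measure.dirac_apply' _ hBpi, Fintype.prod_boole]
      simp [Set.indicator_apply, Set.mem_pi]
    rw [Finset.sum_congr rfl (fun s _ => hdir s)]
    rw [sum_prod_bool m (fun j b => if sg b ∈ B j then (1:ENNReal) else 0)]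
    have hνB : ∀ j, ν j (B j)
        = 2⁻¹ * ((if (1:ℝ) ∈ B j then (1:ENNReal) else 0)
            + (if (-1:ℝ) ∈ B j then (1:ENNReal) else 0)) := by
      intro j
      rw [hν]
      simp only [Measure.smul_apply, Measure.add_apply, smul_eq_mul]
      rw [Measure.dirac_apply' _ (hB j), Measure.dirac_apply' _ (hB j)]
      simp [Set.indicator_apply]
    rw [Finset.prod_congr rfl (fun j _ => hνB j)]
    rw [Finset.prod_mul_distrib, Finset.prod_const, Finset.card_univ, Fintype.card_fin]
    rw [← ENNReal.inv_pow]
    congr 1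
    refine Finset.prod_congr rfl (fun j _ => ?_)
    have hsf : sg false = -1 := by simp [sg]
    have hst : sg true = 1 := by simp [sg]
    rw [hsf, hst, add_comm]
  -- compute the integral
  set g : (Fin m → ℝ) → ℝ := fun x => |∑ j, a j * x j| with hg
  have hgm : Measurable g := by
    apply Measurable.abs
    fun_prop
  have hint : ∀ x : Fin m → ℝ, Integrable g (Measure.dirac x) := by
    intro x
    have hae : g =ᵐ[Measure.dirac x] fun _ => g x := by
      rw [ae_dirac_eq]
      exact Filter.eventually_pure.2 rfl
    exact (integrable_const (g x)).congr hae.symm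
  calc ∫ ω, |∑ j, a j * ε j ω| ∂μ
      = ∫ x, g x ∂(Measure.map (fun ω j => ε j ω) μ) :=
        (integral_map htuple hgm.aestronglyMeasurable).symm
    _ = ∫ x, g x ∂((2 ^ m : ENNReal)⁻¹ • ∑ s : Fin m → Bool, Measure.dirac (fun j => sg (s j))) := by
        rw [hmap, hdisc]
    _ = ((2 ^ m : ENNReal)⁻¹).toReal • ∫ x, g x ∂(∑ s : Fin m → Bool, Measure.dirac (fun j => sg (s j))) :=
        integral_smul_measure _ _
    _ = ((2 ^ m : ENNReal)⁻¹).toReal • ∑ s : Fin m → Bool, ∫ x, g x ∂(Measure.dirac (fun j => sg (s j))) := by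
        rw [integral_finset_sum_measure (fun s _ => hint _)]
    _ = ((2 ^ m : ENNReal)⁻¹).toReal • ∑ s : Fin m → Bool, g (fun j => sg (s j)) := by
        rw [Finset.sum_congr rfl (fun s _ => integral_dirac g _)]
    _ = (∑ s : Fin m → Bool, |∑ j, a j * sg (s j)|) / 2 ^ m := by
        rw [ENNReal.toReal_inv]
        rw [smul_eq_mul]
        have : ((2:ENNReal) ^ m).toReal = 2 ^ m := by
          rw [ENNReal.toReal_pow]
          norm_num
        rw [this, inv_mul_eq_div]

lemma pair_ge (x c u v : ℝ) (hc : 0 ≤ c) (hu : u = x - c) (hv : v = x + c) :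
    2 * c ≤ |u| + |v| := by
  rw [hu, hv]
  have h := abs_add_le (x + c) (c - x)
  have h2 : x + c + (c - x) = 2 * c := by ring
  rw [h2, abs_sub_comm c x] at h
  have h3 : |2 * c| = 2 * c := abs_of_nonneg (by linarith)
  rw [h3] at h
  linarith

lemma pair_ge2 (x c u v : ℝ) (hu : u = x - c) (hv : v = x + c) :
    2 * |x| ≤ |u| + |v| := by
  rw [hu, hv]
  have h := abs_add_le (x + c) (x - c)
  have h2 : x + c + (x - c) = 2 * x := by ring
  rw [h2] at h
  rw [abs_mul] at h
  have h3 : |(2:ℝ)| = 2 := by norm_num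
  rw [h3] at h
  linarith

set_option maxHeartbeats 2000000 in
lemma main_cube (n : ℕ) (δ₀ c₀ : ℝ) (hδ₀ : 0 < δ₀) (hδ₀' : δ₀ < 2 / 3)
    (hc₀ : c₀ = 1 / (2 * Real.sqrt 2) * (Real.sqrt ((4 - δ₀) / 5) - Real.sqrt δ₀))
    (a : Fin (n + 2) → ℝ) (ha : ∑ j, a j ^ 2 = 1)
    (hmono : Antitone a) (hnonneg : ∀ j, 0 ≤ a j)
    (hδ : 2 - Real.sqrt 2 * (a 0 + a 1) ≤ δ₀) :
    (∑ s : Fin (n+2) → Bool, |∑ j, a j * sg (s j)|) / 2 ^ (n + 2)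
      ≥ 1 / Real.sqrt 2 + c₀ * Real.sqrt (2 - Real.sqrt 2 * (a 0 + a 1)) := by
  set r2 := Real.sqrt 2 with hr2def
  have hr2 : r2 ^ 2 = 2 := Real.sq_sqrt (by norm_num)
  have hr2pos : 0 < r2 := Real.sqrt_pos.mpr (by norm_num)
  set u := Real.sqrt (2 - r2 * (a 0 + a 1)) with hudef
  set v := Real.sqrt δ₀ with hvdef
  set w := Real.sqrt ((4 - δ₀) / 5) with hwdef
  have hu0 : 0 ≤ u := Real.sqrt_nonneg _
  have hv0 : 0 ≤ v := Real.sqrt_nonneg _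
  have hw0 : 0 ≤ w := Real.sqrt_nonneg _
  have huv : u ≤ v := Real.sqrt_le_sqrt hδ
  have hvw : v ≤ w := Real.sqrt_le_sqrt (by nlinarith)
  have hv2 : v ^ 2 = δ₀ := Real.sq_sqrt (le_of_lt hδ₀)
  have hw2 : w ^ 2 = (4 - δ₀) / 5 := Real.sq_sqrt (by nlinarith)
  have hw2' : w ^ 2 = (4 - v ^ 2) / 5 := by rw [hw2, hv2]
  -- decompose ha
  have h10 : (0 : Fin (n+1)).succ = (1 : Fin (n+2)) := by simp [Fin.succ_zero_eq_one]
  have ha2 : a 0 ^ 2 + a 1 ^ 2 + ∑ j : Fin n, a j.succ.succ ^ 2 = 1 := by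
    rw [← ha, Fin.sum_univ_succ (fun j => a j ^ 2),
      Fin.sum_univ_succ (fun j : Fin (n+1) => a j.succ ^ 2), h10]
    ring
  have htail0 : 0 ≤ ∑ j : Fin n, a j.succ.succ ^ 2 :=
    Finset.sum_nonneg (fun j _ => sq_nonneg _)
  have h01sq : a 0 ^ 2 + a 1 ^ 2 ≤ 1 := by linarith
  have ha0 : 0 ≤ a 0 := hnonneg 0
  have ha1 : 0 ≤ a 1 := hnonneg 1
  have ha01 : a 1 ≤ a 0 := hmono (by simp [Fin.le_def])
  -- δe ≥ 0
  have hδe : 0 ≤ 2 - r2 * (a 0 + a 1) := by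
    nlinarith [sq_nonneg (a 0 - a 1), sq_nonneg (r2 * (a 0 + a 1) - 2)]
  have hu2 : u ^ 2 = 2 - r2 * (a 0 + a 1) := Real.sq_sqrt hδe
  have hb1 : r2 * (a 0 + a 1) = 2 - u ^ 2 := by rw [hu2]; ring
  -- tail
  have hszarek0 : (2 ^ n : ℝ) * Real.sqrt (∑ j : Fin n, a j.succ.succ ^ 2)
      ≤ Real.sqrt 2 * ∑ s : Fin n → Bool, |∑ j : Fin n, a j.succ.succ * sg (s j)| :=
    szarek n (fun j => a j.succ.succ)
  set T : (Fin n → Bool) → ℝ := fun s => ∑ j : Fin n, a j.succ.succ * sg (s j) with hT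
  set σ := Real.sqrt (∑ j : Fin n, a j.succ.succ ^ 2) with hσdef
  have hσ0 : 0 ≤ σ := Real.sqrt_nonneg _
  have hσ2 : σ ^ 2 = 1 - ((a 0 + a 1) ^ 2 + (a 0 - a 1) ^ 2) / 2 := by
    rw [hσdef, Real.sq_sqrt htail0]; nlinarith [ha2]
  have hszarek : (2 ^ n : ℝ) * σ ≤ r2 * ∑ s : Fin n → Bool, |T s| := hszarek0
  -- expand
  have hX : ∀ (t0 t1 : Bool) (s : Fin n → Bool),
      ∑ j : Fin (n+2), a j * sg ((Fin.cons t0 (Fin.cons t1 s) : Fin (n+2) → Bool) j)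
        = a 0 * sg t0 + a 1 * sg t1 + T s := by
    intro t0 t1 s
    rw [inner_cons a t0 (Fin.cons t1 s), inner_cons (fun j => a j.succ) t1 s, h10]
    ring
  have hXff : ∀ s : Fin n → Bool,
      ∑ j : Fin (n+2), a j * sg ((Fin.cons false (Fin.cons false s) : Fin (n+2) → Bool) j)
        = T s - (a 0 + a 1) := by
    intro s; rw [hX]; simp [sg]; ring
  have hXtf : ∀ s : Fin n → Bool,
      ∑ j : Fin (n+2), a j * sg ((Fin.cons true (Fin.cons false s) : Fin (n+2) → Bool) j)
        = T s + (a 0 - a 1) := by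
    intro s; rw [hX]; simp [sg]; ring
  have hXft : ∀ s : Fin n → Bool,
      ∑ j : Fin (n+2), a j * sg ((Fin.cons false (Fin.cons true s) : Fin (n+2) → Bool) j)
        = T s - (a 0 - a 1) := by
    intro s; rw [hX]; simp [sg]; ring
  have hXtt : ∀ s : Fin n → Bool,
      ∑ j : Fin (n+2), a j * sg ((Fin.cons true (Fin.cons true s) : Fin (n+2) → Bool) j)
        = T s + (a 0 + a 1) := by
    intro s; rw [hX]; simp [sg]; ring
  have expand : ∑ s : Fin (n+2) → Bool, |∑ j, a j * sg (s j)|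
      = ∑ s : Fin n → Bool,
        ((|T s - (a 0 + a 1)| + |T s + (a 0 - a 1)|)
          + (|T s - (a 0 - a 1)| + |T s + (a 0 + a 1)|)) := by
    rw [sum_cons (fun s => |∑ j, a j * sg (s j)|)]
    rw [sum_cons (fun s1 => |∑ j, a j * sg ((Fin.cons false s1 : Fin (n+2) → Bool) j)|
      + |∑ j, a j * sg ((Fin.cons true s1 : Fin (n+2) → Bool) j)|)]
    refine Finset.sum_congr rfl (fun s _ => ?_)
    rw [hXff s, hXtf s, hXft s, hXtt s]
  have hpos2n : (0:ℝ) < 2 ^ n := by positivity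
  have hpows : (2:ℝ) ^ (n+2) = 2 ^ n * 4 := by ring
  have hcard : ∑ _s : Fin n → Bool, (1:ℝ) = 2 ^ n := by
    rw [Finset.sum_const, Finset.card_univ]
    have : Fintype.card (Fin n → Bool) = 2 ^ n := by simp
    rw [this, nsmul_eq_mul]
    push_cast
    ring
  rw [ge_iff_le, le_div_iff₀ (by positivity : (0:ℝ) < 2 ^ (n+2)), expand]
  rcases le_or_gt (u * w / r2) (a 0 - a 1) with hcase | hcase
  · -- case A
    have hBD : ∀ s : Fin n → Bool,
        2 * (a 0 + a 1) + 2 * (a 0 - a 1)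
          ≤ (|T s - (a 0 + a 1)| + |T s + (a 0 - a 1)|)
            + (|T s - (a 0 - a 1)| + |T s + (a 0 + a 1)|) := by
      intro s
      have p1 := pair_ge (T s) (a 0 + a 1) _ _ (by linarith) rfl rfl
      have p2 := pair_ge (T s) (a 0 - a 1) _ _ (by linarith) rfl rfl
      linarith
    have hsum : ∑ s : Fin n → Bool, (2 * (a 0 + a 1) + 2 * (a 0 - a 1))
        ≤ ∑ s : Fin n → Bool,
          ((|T s - (a 0 + a 1)| + |T s + (a 0 - a 1)|)
            + (|T s - (a 0 - a 1)| + |T s + (a 0 + a 1)|)) :=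
      Finset.sum_le_sum (fun s _ => hBD s)
    have hconst : ∑ _s : Fin n → Bool, (2 * (a 0 + a 1) + 2 * (a 0 - a 1))
        = 2 ^ n * (2 * (a 0 + a 1) + 2 * (a 0 - a 1)) := by
      rw [Finset.sum_const, Finset.card_univ]
      have : Fintype.card (Fin n → Bool) = 2 ^ n := by simp
      rw [this, nsmul_eq_mul]; push_cast; ring
    have hsc := scalarA r2 u v w (a 0 + a 1) (a 0 - a 1) c₀ hr2 hr2pos hu0 huv hvw hb1 hc₀ hcase
    rw [hpows]
    calc (1 / r2 + c₀ * u) * (2 ^ n * 4)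
        ≤ ((a 0 + a 1) / 2 + (a 0 - a 1) / 2) * (2 ^ n * 4) := by
          apply mul_le_mul_of_nonneg_right hsc (by positivity)
      _ = 2 ^ n * (2 * (a 0 + a 1) + 2 * (a 0 - a 1)) := by ring
      _ ≤ _ := by rw [← hconst]; exact hsum
  · -- case B
    have hBD : ∀ s : Fin n → Bool,
        2 * (a 0 + a 1) + 2 * |T s|
          ≤ (|T s - (a 0 + a 1)| + |T s + (a 0 - a 1)|)
            + (|T s - (a 0 - a 1)| + |T s + (a 0 + a 1)|) := by
      intro s
      have p1 := pair_ge (T s) (a 0 + a 1) _ _ (by linarith) rfl rfl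
      have p2 := pair_ge2 (T s) (a 0 - a 1) _ _ rfl rfl
      linarith
    have hsum : ∑ s : Fin n → Bool, (2 * (a 0 + a 1) + 2 * |T s|)
        ≤ ∑ s : Fin n → Bool,
          ((|T s - (a 0 + a 1)| + |T s + (a 0 - a 1)|)
            + (|T s - (a 0 - a 1)| + |T s + (a 0 + a 1)|)) :=
      Finset.sum_le_sum (fun s _ => hBD s)
    have hsplit2 : ∑ s : Fin n → Bool, (2 * (a 0 + a 1) + 2 * |T s|)
        = 2 ^ n * (2 * (a 0 + a 1)) + 2 * ∑ s : Fin n → Bool, |T s| := by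
      rw [Finset.sum_add_distrib, Finset.sum_const, Finset.card_univ]
      have : Fintype.card (Fin n → Bool) = 2 ^ n := by simp
      rw [this, nsmul_eq_mul, ← Finset.mul_sum]
      push_cast; ring
    have hsc := scalarB r2 u v w (a 0 + a 1) (a 0 - a 1) c₀ σ hr2 hr2pos hu0 huv hvw hw0
      hw2' hb1 hc₀ (by linarith) (le_of_lt hcase) hσ0 hσ2
    have hTsz : (2:ℝ) ^ n * σ / r2 ≤ ∑ s : Fin n → Bool, |T s| := by
      rw [div_le_iff₀ hr2pos]
      calc (2:ℝ) ^ n * σ ≤ r2 * ∑ s : Fin n → Bool, |T s| := hszarek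
        _ = (∑ s : Fin n → Bool, |T s|) * r2 := by ring
    have hEq : ((a 0 + a 1) / 2 + σ / (2 * r2)) * 2 ^ (n+2)
        = 2 ^ n * (2 * (a 0 + a 1)) + 2 * ((2:ℝ) ^ n * σ / r2) := by
      rw [hpows]
      field_simp
      ring
    calc (1 / r2 + c₀ * u) * 2 ^ (n+2)
        ≤ ((a 0 + a 1) / 2 + σ / (2 * r2)) * 2 ^ (n+2) := by
          apply mul_le_mul_of_nonneg_right hsc (by positivity)
      _ = 2 ^ n * (2 * (a 0 + a 1)) + 2 * ((2:ℝ) ^ n * σ / r2) := hEq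
      _ ≤ 2 ^ n * (2 * (a 0 + a 1)) + 2 * ∑ s : Fin n → Bool, |T s| := by linarith [hTsz]
      _ ≤ _ := by rw [← hsplit2]; exact hsum


end SzarekCube

open Real MeasureTheory ProbabilityTheory

theorem stability_szarek_near_extremizer {Ω : Type*} [MeasurableSpace Ω] (μ : Measure Ω)
    [IsProbabilityMeasure μ] (n : ℕ) (δ₀ : ℝ) (hδ₀ : 0 < δ₀) (hδ₀' : δ₀ < 2 / 3)
    (c₀ : ℝ) (hc₀ : c₀ = (1 / (2 * Real.sqrt 2)) * (Real.sqrt ((4 - δ₀) / 5) - Real.sqrt δ₀))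
    (a : Fin (n + 2) → ℝ) (ha : ∑ j, a j ^ 2 = 1)
    (hmono : Antitone a) (hnonneg : ∀ j, 0 ≤ a j)
    (hδ : 2 - Real.sqrt 2 * (a 0 + a 1) ≤ δ₀)
    (ε : Fin (n + 2) → Ω → ℝ)
    (hεindep : iIndepFun ε μ)
    (hεdist : ∀ j, Measure.map (ε j) μ =
      (2⁻¹ : ENNReal) • (Measure.dirac (1 : ℝ) + Measure.dirac (-1 : ℝ))) :
    (∫ ω, |∑ j, a j * ε j ω| ∂μ) ≥
      1 / Real.sqrt 2 + c₀ * Real.sqrt (2 - Real.sqrt 2 * (a 0 + a 1)) := by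
  have hred := SzarekCube.measure_reduction μ (n + 2) a ε hεindep hεdist
  have hmain := SzarekCube.main_cube n δ₀ c₀ hδ₀ hδ₀' hc₀ a ha hmono hnonneg hδ
  rw [hred]
  exact hmain
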